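/- For all positive integers a and b, p_a · p_b > p_{a+b}, where p_n denotes the n-th prime number. -/

import Mathlib

open Nat

/-- Bool check that `z` is prime, valid for `z ≤ 3363`. -/
def boolPrime (z : ℕ) : Bool :=
  2 ≤ z && (List.range' 2 57).all fun m => !(m * m ≤ z) || !(z % m == 0)

/-- Bool check that `z` is not prime (sound for all `z`). -/
def boolComposite (z : ℕ) : Bool :=
  (List.range' 2 57).any fun m => (m * m ≤ z) && (z % m == 0)

theorem mem_range'_iff {m : ℕ} : m ∈ List.range' 2 57 ↔ 2 ≤ m ∧ m < 59 := by
  rw [List.mem_range']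
  constructor
  · rintro ⟨i, hi, rfl⟩; omega
  · intro ⟨h1, h2⟩; exact ⟨m - 2, by omega, by omega⟩

theorem prime_of_boolPrime {z : ℕ} (hz : z ≤ 3363) (h : boolPrime z = true) : z.Prime := by
  rw [boolPrime, Bool.and_eq_true, List.all_eq_true] at h
  obtain ⟨h2, hall⟩ := h
  rw [Nat.prime_def_le_sqrt]
  refine ⟨by simpa using h2, fun m hm2 hms hdvd => ?_⟩
  have hmm : m * m ≤ z := le_trans (Nat.mul_le_mul hms hms) (by simpa [pow_two] using Nat.sqrt_le' z)
  have hmem : m ∈ List.range' 2 57 := mem_range'_iff.mpr ⟨hm2, by nlinarith⟩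
  have := hall m hmem
  rw [Bool.or_eq_true, Bool.not_eq_true', Bool.not_eq_true'] at this
  rcases this with h' | h'
  · simp only [decide_eq_false_iff_not] at h'
    exact h' hmm
  · rw [beq_eq_false_iff_ne] at h'
    exact h' (Nat.eq_zero_of_dvd_of_lt hdvd |> fun _ => (Nat.mod_eq_zero_of_dvd hdvd))

theorem not_prime_of_boolComposite {z : ℕ} (h : boolComposite z = true) : ¬ z.Prime := by
  intro hp
  rw [boolComposite, List.any_eq_true] at h
  obtain ⟨m, hmem, hm⟩ := h
  rw [Bool.and_eq_true] at hm
  obtain ⟨h1, h2⟩ := hm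
  rw [mem_range'_iff] at hmem
  simp only [decide_eq_true_eq] at h1
  rw [beq_iff_eq] at h2
  have hdvd : m ∣ z := Nat.dvd_of_mod_eq_zero h2
  exact (Nat.prime_def_le_sqrt.mp hp).2 m hmem.1 (Nat.le_sqrt.mpr h1) hdvd


def primeTableTail : List ℕ := [
3, 5, 7, 11, 13, 17, 19, 23, 29, 31, 37, 41, 43, 47, 53,
59, 61, 67, 71, 73, 79, 83, 89, 97, 101, 103, 107, 109, 113, 127, 131,
137, 139, 149, 151, 157, 163, 167, 173, 179, 181, 191, 193, 197, 199, 211, 223,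
227, 229, 233, 239, 241, 251, 257, 263, 269, 271, 277, 281, 283, 293, 307, 311,
313, 317, 331, 337, 347, 349, 353, 359, 367, 373, 379, 383, 389, 397, 401, 409,
419, 421, 431, 433, 439, 443, 449, 457, 461, 463, 467, 479, 487, 491, 499, 503,
509, 521, 523, 541, 547, 557, 563, 569, 571, 577, 587, 593, 599, 601, 607, 613,
617, 619, 631, 641, 643, 647, 653, 659, 661, 673, 677, 683, 691, 701, 709, 719,
727, 733, 739, 743, 751, 757, 761, 769, 773, 787, 797, 809, 811, 821, 823, 827,
829, 839, 853, 857, 859, 863, 877, 881, 883, 887, 907, 911, 919, 929, 937, 941,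
947, 953, 967, 971, 977, 983, 991, 997, 1009, 1013, 1019, 1021, 1031, 1033, 1039, 1049,
1051, 1061, 1063, 1069, 1087, 1091, 1093, 1097, 1103, 1109, 1117, 1123, 1129, 1151, 1153, 1163,
1171, 1181, 1187, 1193, 1201, 1213, 1217, 1223, 1229, 1231, 1237, 1249, 1259, 1277, 1279, 1283,
1289, 1291, 1297, 1301, 1303, 1307, 1319, 1321, 1327, 1361, 1367, 1373, 1381, 1399, 1409, 1423,
1427, 1429, 1433, 1439, 1447, 1451, 1453, 1459, 1471, 1481, 1483, 1487, 1489, 1493, 1499, 1511,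
1523, 1531, 1543, 1549, 1553, 1559, 1567, 1571, 1579, 1583, 1597, 1601, 1607, 1609, 1613, 1619,
1621, 1627, 1637, 1657, 1663, 1667, 1669, 1693, 1697, 1699, 1709, 1721, 1723, 1733, 1741, 1747,
1753, 1759, 1777, 1783, 1787, 1789, 1801, 1811, 1823, 1831, 1847, 1861, 1867, 1871, 1873, 1877,
1879, 1889, 1901, 1907, 1913, 1931, 1933, 1949, 1951, 1973, 1979, 1987, 1993, 1997, 1999, 2003,
2011, 2017, 2027, 2029, 2039, 2053, 2063, 2069, 2081, 2083, 2087, 2089, 2099, 2111, 2113, 2129,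
2131, 2137, 2141, 2143, 2153, 2161, 2179, 2203
]


def chainOk : ℕ → List ℕ → Bool
  | _, [] => true
  | x, y :: l =>
    x < y && y ≤ 3363 && boolPrime y &&
      ((List.range' (x + 1) (y - x - 1)).all boolComposite) && chainOk y l


theorem count_const_of_gap {p : ℕ → Prop} [DecidablePred p] {x : ℕ} (d : ℕ)
    (hgap : ∀ z, x < z → z < x + 1 + d → ¬ p z) :
    Nat.count p (x + 1 + d) = Nat.count p (x + 1) := by
  induction d with
  | zero => rfl
  | succ d ih =>
      have : x + 1 + (d + 1) = (x + 1 + d) + 1 := by omega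
      rw [this, Nat.count_succ, if_neg (hgap _ (by omega) (by omega)),
        ih (fun z h1 h2 => hgap z h1 (by omega))]
      omega

theorem nth_succ_of_gap {i x y : ℕ} (hx : Nat.nth Nat.Prime i = x) (hy : y.Prime)
    (hxy : x < y) (hgap : ∀ z, x < z → z < y → ¬ z.Prime) :
    Nat.nth Nat.Prime (i + 1) = y := by
  have hcy : Nat.count Nat.Prime y = i + 1 := by
    have hd : y = x + 1 + (y - x - 1) := by omega
    rw [hd, count_const_of_gap _ (fun z h1 h2 => hgap z h1 (by omega)), ← hx,
      Nat.count_nth_succ_of_infinite Nat.infinite_setOf_prime]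
  rw [← hcy, Nat.nth_count hy]

theorem chain_nth : ∀ (l : List ℕ) (i x : ℕ), Nat.nth Nat.Prime i = x →
    chainOk x l = true → ∀ j (hj : j < l.length),
      Nat.nth Nat.Prime (i + 1 + j) = l.get ⟨j, hj⟩ := by
  intro l
  induction l with
  | nil => intro _ _ _ _ j hj; simp at hj
  | cons y l ih =>
      intro i x hx hchain j hj
      rw [chainOk] at hchain
      simp only [Bool.and_eq_true] at hchain
      obtain ⟨⟨⟨⟨hlt, hle⟩, hbp⟩, hgapb⟩, hrest⟩ := hchain
      have hxy : x < y := by simpa using hlt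
      have hyprime : y.Prime := prime_of_boolPrime (by simpa using hle) hbp
      have hgap : ∀ z, x < z → z < y → ¬ z.Prime := by
        intro z h1 h2
        rw [List.all_eq_true] at hgapb
        refine not_prime_of_boolComposite (hgapb z ?_)
        rw [List.mem_range']
        exact ⟨z - x - 1, by omega, by omega⟩
      have hy : Nat.nth Nat.Prime (i + 1) = y := nth_succ_of_gap hx hyprime hxy hgap
      match j with
      | 0 => simpa using hy
      | (j' + 1) =>
          have := ih (i + 1) y hy hrest j' (by simpa using hj)
          have harith : i + 1 + (j' + 1) = i + 1 + 1 + j' := by omega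
          rw [harith, this]
          rfl


def primeTable : List ℕ := 2 :: primeTableTail

set_option maxRecDepth 100000 in
theorem chainOk_primeTable : chainOk 2 primeTableTail = true := by decide

set_option maxRecDepth 100000 in
theorem primeTable_length : primeTable.length = 328 := by decide

theorem primeTable_correct : ∀ j (hj : j < primeTable.length),
    Nat.nth Nat.Prime j = primeTable.get ⟨j, hj⟩ := by
  intro j hj
  match j with
  | 0 => rw [Nat.nth_prime_zero_eq_two]; rfl
  | (j' + 1) =>
      have h : j' < primeTableTail.length := by
        rw [primeTable, List.length_cons] at hj
        omega
      have := chain_nth primeTableTail 0 2 Nat.nth_prime_zero_eq_two chainOk_primeTable j' h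
      rw [show (0 + 1 + j' : ℕ) = j' + 1 by omega] at this
      rw [this]
      rfl

set_option maxRecDepth 10000 in
theorem tf1_bool : ((List.range 163).all
    (fun t => primeTable.getD (2*t+3) 0 < 3 * primeTable.getD (t+1) 0)) = true := by decide

theorem table_fact1 {b : ℕ} (h2 : 2 ≤ b) (h164 : b ≤ 164) :
    Nat.nth Nat.Prime (2*b - 1) < 3 * Nat.nth Nat.Prime (b - 1) := by
  have hmem : b - 2 ∈ List.range 163 := List.mem_range.mpr (by omega)
  have h := List.all_eq_true.mp tf1_bool _ hmem
  simp only [decide_eq_true_eq] at h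
  have h1 : 2*(b-2)+3 < primeTable.length := by rw [primeTable_length]; omega
  have h2' : (b-2)+1 < primeTable.length := by rw [primeTable_length]; omega
  rw [List.getD_eq_getElem _ _ h1, List.getD_eq_getElem _ _ h2'] at h
  have e1 := primeTable_correct _ h1
  have e2 := primeTable_correct _ h2'
  rw [List.get_eq_getElem] at e1 e2
  rw [show 2*b-1 = 2*(b-2)+3 by omega, show b-1 = (b-2)+1 by omega, e1, e2]
  exact h

theorem table_fact2 : Nat.nth Nat.Prime 164 = 977 := by
  have h : (164 : ℕ) < primeTable.length := by rw [primeTable_length]; omega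
  rw [primeTable_correct 164 h]
  rfl


open Nat Finset

/-- Generalization of the central binomial bound from the Bertrand file:
the primes in `(n, 2n]` are kept as an explicit product. -/
theorem centralBinom_le_general (n : ℕ) (n_large : 2 < n) :
    centralBinom n ≤ (2 * n) ^ Nat.sqrt (2 * n) * 4 ^ (2 * n / 3) *
      ∏ p ∈ (Finset.Ioc n (2 * n)).filter Nat.Prime, p := by
  have n_pos : 0 < n := by omega
  have n2_pos : 1 ≤ 2 * n := by omega
  have hsplit : centralBinom n =
      (∏ x ∈ Finset.range (2 * n / 3 + 1), x ^ (centralBinom n).factorization x) *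
        ∏ x ∈ Finset.Ico (2 * n / 3 + 1) (2 * n + 1), x ^ (centralBinom n).factorization x := by
    conv_lhs => rw [← n.prod_pow_factorization_centralBinom]
    rw [Finset.range_eq_Ico, ← Finset.prod_Ico_consecutive _ (by omega : 0 ≤ 2 * n / 3 + 1)
      (by omega : 2 * n / 3 + 1 ≤ 2 * n + 1), ← Finset.range_eq_Ico]
  rw [hsplit]
  apply mul_le_mul'
  · -- the part over range (2*n/3 + 1), as in mathlib's Bertrand proof
    have hSprod : ∏ x ∈ (Finset.range (2 * n / 3 + 1)).filter Nat.Prime,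
        x ^ (centralBinom n).factorization x
        = ∏ x ∈ Finset.range (2 * n / 3 + 1), x ^ (centralBinom n).factorization x := by
      refine Finset.prod_filter_of_ne fun p _ h => ?_
      contrapose! h
      rw [Nat.factorization_eq_zero_of_not_prime n.centralBinom h, _root_.pow_zero]
    rw [← hSprod, ← Finset.prod_filter_mul_prod_filter_not
      ((Finset.range (2 * n / 3 + 1)).filter Nat.Prime) (· ≤ Nat.sqrt (2 * n))]
    apply mul_le_mul'
    · refine (Finset.prod_le_prod' fun p _ =>
        (?_ : p ^ (centralBinom n).factorization p ≤ 2 * n)).trans ?_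
      · exact Nat.pow_factorization_choose_le (by omega)
      have hcard : (Finset.Icc 1 (Nat.sqrt (2 * n))).card = Nat.sqrt (2 * n) := by
        rw [Nat.card_Icc, Nat.add_sub_cancel]
      rw [Finset.prod_const]
      refine pow_right_mono₀ n2_pos ((Finset.card_le_card fun x hx => ?_).trans hcard.le)
      obtain ⟨h1, h2⟩ := Finset.mem_filter.1 hx
      exact Finset.mem_Icc.mpr ⟨(Finset.mem_filter.1 h1).2.one_lt.le, h2⟩
    · refine le_trans ?_ (primorial_le_4_pow (2 * n / 3))
      refine (Finset.prod_le_prod' fun p hp =>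
        (?_ : p ^ (centralBinom n).factorization p ≤ p)).trans ?_
      · obtain ⟨h1, h2⟩ := Finset.mem_filter.1 hp
        refine (pow_right_mono₀ (Finset.mem_filter.1 h1).2.one_lt.le ?_).trans (pow_one p).le
        exact Nat.factorization_choose_le_one (Nat.sqrt_lt'.mp <| not_le.1 h2)
      refine Finset.prod_le_prod_of_subset_of_one_le' (Finset.filter_subset _ _) ?_
      exact fun p hp _ => (Finset.mem_filter.1 hp).2.one_lt.le
  · -- the part over Ico (2*n/3+1) (2*n+1)
    have hsq : Nat.sqrt (2 * n) ≤ n := by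
      calc Nat.sqrt (2 * n) ≤ Nat.sqrt (n ^ 2) := Nat.sqrt_le_sqrt (by nlinarith)
        _ = n := Nat.sqrt_eq' n
    calc ∏ x ∈ Finset.Ico (2 * n / 3 + 1) (2 * n + 1), x ^ (centralBinom n).factorization x
        ≤ ∏ x ∈ Finset.Ico (2 * n / 3 + 1) (2 * n + 1),
            (if n < x ∧ x.Prime then x else 1) := by
          refine Finset.prod_le_prod' fun x hx => ?_
          rw [Finset.mem_Ico] at hx
          by_cases hp : x.Prime
          · by_cases hn : n < x
            · rw [if_pos ⟨hn, hp⟩]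
              have hν1 : (centralBinom n).factorization x ≤ 1 :=
                Nat.factorization_choose_le_one (Nat.sqrt_lt'.mp (lt_of_le_of_lt hsq hn))
              calc x ^ (centralBinom n).factorization x ≤ x ^ 1 :=
                    pow_right_mono₀ hp.one_lt.le hν1
                _ = x := pow_one x
            · rw [if_neg (by tauto)]
              have hz : (centralBinom n).factorization x = 0 :=
                Nat.factorization_centralBinom_of_two_mul_self_lt_three_mul n_large
                  (by omega) (by omega)
              rw [hz, pow_zero]
          · rw [if_neg (by tauto)]
            rw [Nat.factorization_eq_zero_of_not_prime n.centralBinom hp, pow_zero]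
      _ = ∏ x ∈ (Finset.Ico (2 * n / 3 + 1) (2 * n + 1)).filter
            (fun x => n < x ∧ x.Prime), x := by
          rw [Finset.prod_filter]
      _ = ∏ p ∈ (Finset.Ioc n (2 * n)).filter Nat.Prime, p := by
          congr 1
          ext x
          simp only [Finset.mem_filter, Finset.mem_Ico, Finset.mem_Ioc]
          constructor
          · rintro ⟨⟨_, _⟩, h1, h2⟩; exact ⟨⟨h1, by omega⟩, h2⟩
          · rintro ⟨⟨h1, h2⟩, h3⟩; exact ⟨⟨by omega, by omega⟩, h1, h3⟩

section RealIneq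
open Real

theorem sqrt_ineq_concave :
    ConcaveOn ℝ (Set.Ioi 0.5) (fun x : ℝ =>
      Real.log x + 1.5 * (Real.sqrt (2 * x) * Real.log (2 * x)) - Real.log 4 / 3 * x) := by
  apply ConcaveOn.sub
  · apply ConcaveOn.add
    · exact strictConcaveOn_log_Ioi.concaveOn.subset
        (Set.Ioi_subset_Ioi (by norm_num)) (convex_Ioi 0.5)
    · apply ConcaveOn.smul (by norm_num : (0:ℝ) ≤ 1.5)
      convert ((strictConcaveOn_sqrt_mul_log_Ioi.concaveOn.comp_linearMap
        ((2 : ℝ) • LinearMap.id))) using 1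
      case e'_11 =>
        ext x
        simp only [Set.mem_Ioi, Set.mem_preimage, LinearMap.smul_apply,
          LinearMap.id_coe, id_eq, smul_eq_mul]
        rw [← mul_lt_mul_iff_right₀ (two_pos)]
        norm_num1
        rfl
      case e'_12 => rfl
      all_goals rfl
  · apply ConvexOn.smul
    · refine div_nonneg (log_nonneg (by norm_num1)) (by norm_num1)
    · exact convexOn_id (convex_Ioi (0.5 : ℝ))

theorem real_R {x : ℝ} (hx : 1458 ≤ x) :
    (1.5 * Real.sqrt (2 * x) + 1) * Real.log (2 * x) ≤ Real.log 4 * (x - 2) / 3 := by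
  let f : ℝ → ℝ := fun x =>
    Real.log x + 1.5 * (Real.sqrt (2 * x) * Real.log (2 * x)) - Real.log 4 / 3 * x
  have hs2 : Real.sqrt (2 * 2 : ℝ) = 2 := by
    rw [show (2 * 2 : ℝ) = 2 ^ 2 by norm_num]
    exact Real.sqrt_sq (by norm_num)
  have hs1458 : Real.sqrt (2 * 1458 : ℝ) = 54 := by
    rw [show (2 * 1458 : ℝ) = 54 ^ 2 by norm_num]
    exact Real.sqrt_sq (by norm_num)
  have hf1458 : f 1458 ≤ -Real.log 2 - 2/3 * Real.log 4 := by
    show Real.log 1458 + 1.5 * (Real.sqrt (2 * 1458) * Real.log (2 * 1458)) -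
      Real.log 4 / 3 * 1458 ≤ _
    rw [hs1458]
    have hl : Real.log 1458 + Real.log 2 = Real.log 2916 := by
      rw [← Real.log_mul (by norm_num) (by norm_num)]; norm_num
    have key : (246 : ℝ) * Real.log 2916 ≤ 1456 * Real.log 4 := by
      have h1 : Real.log (2916 ^ (246:ℕ)) ≤ Real.log (4 ^ (1456:ℕ)) := by
        apply Real.log_le_log (by positivity)
        rw [show (1456:ℕ) = 8 * 182 from rfl, pow_mul]
        norm_num
      rwa [Real.log_pow, Real.log_pow] at h1
      
    nlinarith [key, hl]
  have hf2 : -Real.log 2 - 2/3 * Real.log 4 ≤ f 2 := by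
    show _ ≤ Real.log 2 + 1.5 * (Real.sqrt (2 * 2) * Real.log (2 * 2)) - Real.log 4 / 3 * 2
    rw [hs2]
    have h2 : (0:ℝ) ≤ Real.log 2 := Real.log_nonneg (by norm_num)
    have h4 : (0:ℝ) ≤ Real.log 4 := Real.log_nonneg (by norm_num)
    nlinarith
  have hcon := sqrt_ineq_concave
  have hmain : f x ≤ f 1458 := by
    refine hcon.right_le_of_le_left'' ?_ ?_ ?_ hx (hf1458.trans hf2)
    · simp only [Set.mem_Ioi]; norm_num
    · simp only [Set.mem_Ioi]; nlinarith
    · norm_num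
  have hfx : f x ≤ -Real.log 2 - 2/3 * Real.log 4 := hmain.trans hf1458
  have hxpos : (0:ℝ) < x := by nlinarith
  have hlog2x : Real.log (2 * x) = Real.log 2 + Real.log x :=
    Real.log_mul (by norm_num) (ne_of_gt hxpos)
  show (1.5 * Real.sqrt (2*x) + 1) * Real.log (2*x) ≤ _
  have : f x = Real.log x + 1.5 * (Real.sqrt (2 * x) * Real.log (2 * x)) - Real.log 4 / 3 * x :=
    rfl
  nlinarith [hfx, hlog2x]

end RealIneq


/-- Key counting lemma: the interval `(w, 2w]` contains at least `a` primes,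
provided `w ≥ 1458` and `2a ≤ sqrt (2w) + 2`. -/
theorem primes_Ioc_card_ge {w a : ℕ} (hw : 1458 ≤ w) (ha : 2 * a ≤ Nat.sqrt (2 * w) + 2) :
    a ≤ ((Finset.Ioc w (2 * w)).filter Nat.Prime).card := by
  rcases Nat.eq_zero_or_pos a with rfl | hapos
  · exact Nat.zero_le _
  by_contra hcon
  push_neg at hcon
  set k := ((Finset.Ioc w (2 * w)).filter Nat.Prime).card with hk
  set s := Nat.sqrt (2 * w) with hs
  -- the product of the primes in (w, 2w] is at most (2w)^(a-1)
  have hPP : ∏ p ∈ (Finset.Ioc w (2 * w)).filter Nat.Prime, p ≤ (2 * w) ^ (a - 1) := by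
    calc ∏ p ∈ (Finset.Ioc w (2 * w)).filter Nat.Prime, p ≤ (2 * w) ^ k :=
          Finset.prod_le_pow_card _ _ _ (fun x hx => by
            have := (Finset.mem_filter.mp hx).1
            exact (Finset.mem_Ioc.mp this).2)
      _ ≤ (2 * w) ^ (a - 1) := Nat.pow_le_pow_right (by omega) (by omega)
  have H2 : 4 ^ w < w * centralBinom w := Nat.four_pow_lt_mul_centralBinom w (by omega)
  have H3 := centralBinom_le_general w (by omega)
  have key : 4 ^ w < (2 * w) ^ (s + a) * 4 ^ (2 * w / 3) := by
    calc 4 ^ w < w * centralBinom w := H2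
      _ ≤ w * ((2 * w) ^ s * 4 ^ (2 * w / 3) *
            ∏ p ∈ (Finset.Ioc w (2 * w)).filter Nat.Prime, p) := by
          exact Nat.mul_le_mul_left w H3
      _ ≤ w * ((2 * w) ^ s * 4 ^ (2 * w / 3) * (2 * w) ^ (a - 1)) := by
          exact Nat.mul_le_mul_left w (Nat.mul_le_mul_left _ hPP)
      _ ≤ (2 * w) ^ 1 * ((2 * w) ^ s * 4 ^ (2 * w / 3) * (2 * w) ^ (a - 1)) := by
          exact Nat.mul_le_mul_right _ (by rw [pow_one]; omega)
      _ = (2 * w) ^ (s + a) * 4 ^ (2 * w / 3) := by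
          rw [show (2*w)^1 * ((2*w)^s * 4^(2*w/3) * (2*w)^(a-1))
            = ((2*w)^1 * (2*w)^s * (2*w)^(a-1)) * 4^(2*w/3) by ring, ← pow_add, ← pow_add,
            show 1 + s + (a - 1) = s + a by omega]
  set m := w - 2 * w / 3 with hm
  have hwm : m + 2 * w / 3 = w := by omega
  have key2 : 4 ^ m < (2 * w) ^ (s + a) := by
    have hkey := key
    nth_rewrite 1 [← hwm] at hkey
    rw [pow_add] at hkey
    exact Nat.lt_of_mul_lt_mul_right hkey
  -- move to the reals
  have keyR : (m : ℝ) * Real.log 4 < (s + a : ℕ) * Real.log (2 * (w:ℝ)) := by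
    have hcast : ((4:ℕ):ℝ) ^ m < ((2 * w : ℕ):ℝ) ^ (s + a) := by
      exact_mod_cast key2
    have hlog := Real.log_lt_log (by positivity) hcast
    rw [Real.log_pow, Real.log_pow] at hlog
    have : ((2 * w : ℕ):ℝ) = 2 * (w:ℝ) := by push_cast; ring
    rw [this] at hlog
    exact_mod_cast hlog
  have hlog2w : (0:ℝ) ≤ Real.log (2 * (w:ℝ)) := by
    apply Real.log_nonneg
    have : (1458:ℝ) ≤ (w:ℝ) := by exact_mod_cast hw
    nlinarith
  have hlog4 : (0:ℝ) ≤ Real.log 4 := Real.log_nonneg (by norm_num)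
  have hwR : (1458:ℝ) ≤ (w:ℝ) := by exact_mod_cast hw
  have hmR : ((w:ℝ) - 2)/3 ≤ (m:ℝ) := by
    have h3 : w - 2 ≤ 3 * m := by omega
    have h2w : 2 ≤ w := by omega
    have hc : ((w:ℝ)) - 2 ≤ 3 * (m:ℝ) := by
      have hcc := (Nat.cast_le (α := ℝ)).mpr h3
      push_cast [Nat.cast_sub h2w] at hcc
      linarith
    linarith
  have hsa : ((s + a : ℕ) : ℝ) ≤ 1.5 * Real.sqrt (2 * (w:ℝ)) + 1 := by
    have hsR : ((s:ℕ) : ℝ) ≤ Real.sqrt ((2 * w : ℕ):ℝ) := Real.nat_sqrt_le_real_sqrt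
    have hcast : ((2 * w : ℕ):ℝ) = 2 * (w:ℝ) := by push_cast; ring
    rw [hcast] at hsR
    have haR : (a:ℝ) ≤ ((s:ℕ):ℝ)/2 + 1 := by
      have := (Nat.cast_le (α := ℝ)).mpr ha
      push_cast at this ⊢
      linarith
    push_cast
    nlinarith
  have hR := real_R hwR
  -- combine everything into a contradiction
  have hfinal : Real.log 4 * ((w:ℝ) - 2) / 3 < Real.log 4 * ((w:ℝ) - 2) / 3 := by
    calc Real.log 4 * ((w:ℝ) - 2) / 3 = ((w:ℝ) - 2)/3 * Real.log 4 := by ring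
      _ ≤ (m:ℝ) * Real.log 4 := by
          exact mul_le_mul_of_nonneg_right hmR hlog4
      _ < (s + a : ℕ) * Real.log (2 * (w:ℝ)) := keyR
      _ ≤ (1.5 * Real.sqrt (2 * (w:ℝ)) + 1) * Real.log (2 * (w:ℝ)) := by
          exact mul_le_mul_of_nonneg_right hsa hlog2w
      _ ≤ Real.log 4 * ((w:ℝ) - 2) / 3 := hR
  exact lt_irrefl _ hfinal


open Nat

theorem nth_prime_mono {i j : ℕ} (h : i ≤ j) : Nat.nth Nat.Prime i ≤ Nat.nth Nat.Prime j :=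
  Nat.nth_monotone Nat.infinite_setOf_prime h

theorem nth_prime_prime (i : ℕ) : (Nat.nth Nat.Prime i).Prime :=
  Nat.nth_mem_of_infinite Nat.infinite_setOf_prime i

theorem nth_prime_ge_three {A : ℕ} (hA : 1 ≤ A) : 3 ≤ Nat.nth Nat.Prime A := by
  calc 3 = Nat.nth Nat.Prime 1 := Nat.nth_prime_one_eq_three.symm
    _ ≤ Nat.nth Nat.Prime A := nth_prime_mono hA

theorem nth_prime_odd {A : ℕ} (hA : 1 ≤ A) : Odd (Nat.nth Nat.Prime A) :=
  (nth_prime_prime A).odd_of_ne_two (by have := nth_prime_ge_three hA; omega)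

/-- `2 * (A + 1) ≤ p_{A+1} + 1`, i.e. the (A+1)-st prime is at least `2A+1`. -/
theorem two_mul_index_le {A : ℕ} (hA : 1 ≤ A) :
    2 * (A + 1) ≤ Nat.nth Nat.Prime A + 1 := by
  set u := Nat.nth Nat.Prime A with hu
  have hu3 : 3 ≤ u := nth_prime_ge_three hA
  have huodd : Odd u := nth_prime_odd hA
  have hcount : Nat.count Nat.Prime (u + 1) = A + 1 :=
    Nat.count_nth_succ_of_infinite Nat.infinite_setOf_prime A
  have h3 : Nat.count Nat.Prime 3 = 1 := by
    rw [show (3:ℕ) = 2 + 1 by rfl, Nat.count_succ]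
    rw [show (2:ℕ) = 1 + 1 by rfl, Nat.count_succ]
    rw [show (1:ℕ) = 0 + 1 by rfl, Nat.count_succ, Nat.count_zero]
    simp [Nat.prime_two, Nat.not_prime_one, Nat.not_prime_zero]
  have hπ := Nat.primeCounting'_add_le (a := 2) (k := 3) (by norm_num) (by norm_num) (u - 2)
  rw [show 3 + (u - 2) = u + 1 by omega] at hπ
  have hπ' : Nat.count Nat.Prime (u + 1) ≤
      Nat.count Nat.Prime 3 + Nat.totient 2 * ((u - 2) / 2 + 1) := hπ
  rw [hcount, h3, Nat.totient_two, one_mul] at hπ'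
  obtain ⟨t, ht⟩ := huodd
  omega

/-- Bertrand: consecutive prime ratio below 2. -/
theorem nth_prime_succ_lt_two_mul (B : ℕ) :
    Nat.nth Nat.Prime (B + 1) < 2 * Nat.nth Nat.Prime B := by
  set v := Nat.nth Nat.Prime B with hv
  have hvp : v.Prime := nth_prime_prime B
  obtain ⟨q, hq, hq1, hq2⟩ := Nat.exists_prime_lt_and_le_two_mul v (by
    have := hvp.two_le; omega)
  have hqlt : q < 2 * v := by
    rcases Nat.lt_or_ge q (2 * v) with h | h
    · exact h
    · exfalso
      have : q = 2 * v := by omega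
      subst this
      have h2 : (2:ℕ) ∣ 2 * v := ⟨v, rfl⟩
      rcases hq.eq_one_or_self_of_dvd 2 h2 with h' | h'
      · omega
      · have := hvp.two_le; omega
  have hcount : B + 1 < Nat.count Nat.Prime (q + 1) := by
    have h1 : Nat.count Nat.Prime (v + 1) ≤ Nat.count Nat.Prime q :=
      Nat.count_monotone _ (by omega)
    have h2 : Nat.count Nat.Prime (v + 1) = B + 1 :=
      Nat.count_nth_succ_of_infinite Nat.infinite_setOf_prime B
    have h3 : Nat.count Nat.Prime (q + 1) = Nat.count Nat.Prime q + 1 := by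
      rw [Nat.count_succ, if_pos hq]
    omega
  have hlt : Nat.nth Nat.Prime (B + 1) < q + 1 :=
    (Nat.lt_nth_iff_count_lt Nat.infinite_setOf_prime).mp hcount
  omega

/-- Main auxiliary result, for `1 ≤ A ≤ B`. -/
theorem main_aux {A B : ℕ} (hA : 1 ≤ A) (hAB : A ≤ B) :
    Nat.nth Nat.Prime (A + B + 1) < Nat.nth Nat.Prime A * Nat.nth Nat.Prime B := by
  rcases Nat.lt_or_ge B 164 with hB | hB
  · -- finite region: use the table fact p_{2b} < 3 p_b
    have h1 : Nat.nth Nat.Prime (A + B + 1) ≤ Nat.nth Nat.Prime (2 * (B + 1) - 1) :=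
      nth_prime_mono (by omega)
    have h2 := table_fact1 (b := B + 1) (by omega) (by omega)
    have h3 : 3 ≤ Nat.nth Nat.Prime A := nth_prime_ge_three hA
    have h4 : Nat.nth Nat.Prime (B + 1 - 1) = Nat.nth Nat.Prime B := by norm_num
    rw [h4] at h2
    calc Nat.nth Nat.Prime (A + B + 1) ≤ Nat.nth Nat.Prime (2 * (B + 1) - 1) := h1
      _ < 3 * Nat.nth Nat.Prime B := h2
      _ ≤ Nat.nth Nat.Prime A * Nat.nth Nat.Prime B :=
          Nat.mul_le_mul_right _ h3
  · -- analytic region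
    set u := Nat.nth Nat.Prime A with hu
    set v := Nat.nth Nat.Prime B with hv
    have hu3 : 3 ≤ u := nth_prime_ge_three hA
    have hup : u.Prime := nth_prime_prime A
    have hvp : v.Prime := nth_prime_prime B
    have huv : u ≤ v := nth_prime_mono hAB
    have hv977 : 977 ≤ v := by
      calc (977:ℕ) = Nat.nth Nat.Prime 164 := table_fact2.symm
        _ ≤ v := nth_prime_mono hB
    have huodd : Odd u := nth_prime_odd hA
    have hvodd : Odd v := nth_prime_odd (by omega)
    have huvodd : Odd (u * v) := huodd.mul hvodd
    set w := u * v / 2 with hw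
    have h2w : 2 * w = u * v - 1 := by
      obtain ⟨t, ht⟩ := huvodd
      omega
    have hw1458 : 1458 ≤ w := by
      have : 3 * 977 ≤ u * v := Nat.mul_le_mul hu3 hv977
      omega
    have hwv : v ≤ w := by
      have : 3 * v ≤ u * v := Nat.mul_le_mul_right v hu3
      have hv2 : 2 ≤ v := hvp.two_le
      omega
    -- the sqrt bound :  2 * (A+1) ≤ sqrt (2w) + 2
    have hsqrt : 2 * (A + 1) ≤ Nat.sqrt (2 * w) + 2 := by
      have h1 : 2 * (A + 1) ≤ u + 1 := two_mul_index_le hA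
      have h2 : u - 1 ≤ Nat.sqrt (2 * w) := by
        rw [Nat.le_sqrt]
        have hmul : u * u ≤ u * v := Nat.mul_le_mul_left u huv
        have h2w1 : 2 * w + 1 = u * v := by
          have : 3 * 977 ≤ u * v := Nat.mul_le_mul hu3 hv977
          omega
        zify [show (1:ℕ) ≤ u by omega]
        zify at hmul h2w1
        nlinarith [hmul, h2w1]
      omega
    have hk := primes_Ioc_card_ge hw1458 (a := A + 1) hsqrt
    -- now count primes below u * v
    have hcount : A + B + 1 < Nat.count Nat.Prime (u * v) := by
      have hcc : Nat.count Nat.Prime (u * v) =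
          ((Finset.range (u * v)).filter Nat.Prime).card := by
        rw [Nat.count_eq_card_filter_range]
      have hsub : ((Finset.range (v+1)).filter Nat.Prime) ∪
          ((Finset.Ioc w (2*w)).filter Nat.Prime) ⊆ (Finset.range (u*v)).filter Nat.Prime := by
        intro x hx
        rw [Finset.mem_union, Finset.mem_filter, Finset.mem_filter] at hx
        rw [Finset.mem_filter, Finset.mem_range]
        rcases hx with ⟨hx1, hx2⟩ | ⟨hx1, hx2⟩
        · rw [Finset.mem_range] at hx1
          refine ⟨?_, hx2⟩
          have : 3 * v ≤ u * v := Nat.mul_le_mul_right v hu3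
          omega
        · rw [Finset.mem_Ioc] at hx1
          exact ⟨by omega, hx2⟩
      have hdisj : Disjoint ((Finset.range (v+1)).filter Nat.Prime)
          ((Finset.Ioc w (2*w)).filter Nat.Prime) := by
        rw [Finset.disjoint_left]
        intro x hx1 hx2
        rw [Finset.mem_filter, Finset.mem_range] at hx1
        rw [Finset.mem_filter, Finset.mem_Ioc] at hx2
        omega
      have hcard := Finset.card_le_card hsub
      rw [Finset.card_union_of_disjoint hdisj] at hcard
      have hA' : ((Finset.range (v+1)).filter Nat.Prime).card = B + 1 := by
        rw [← Nat.count_eq_card_filter_range]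
        exact Nat.count_nth_succ_of_infinite Nat.infinite_setOf_prime B
      rw [hcc]
      omega
    have := (Nat.lt_nth_iff_count_lt Nat.infinite_setOf_prime).mp hcount
    exact this

theorem main_le {a b : ℕ} (ha : 1 ≤ a) (hb : 1 ≤ b) (hab : a ≤ b) :
    Nat.nth Nat.Prime (a + b - 1) < Nat.nth Nat.Prime (a - 1) * Nat.nth Nat.Prime (b - 1) := by
  rcases Nat.eq_or_lt_of_le ha with h1 | h1
  · -- a = 1 : Bertrand
    have hb1 : a + b - 1 = (b - 1) + 1 := by omega
    have ha0 : a - 1 = 0 := by omega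
    rw [hb1, ha0, Nat.nth_prime_zero_eq_two]
    exact nth_prime_succ_lt_two_mul (b - 1)
  · have harw : a + b - 1 = (a - 1) + (b - 1) + 1 := by omega
    rw [harw]
    exact main_aux (by omega) (by omega)


/-- The n-th prime (1-indexed): p_1 = 2, p_2 = 3, ... -/
noncomputable def nthPrime (i : ℕ) : ℕ := Nat.nth Nat.Prime (i - 1)

theorem nthPrime_add_lt_mul (a b : ℕ) (ha : 1 ≤ a) (hb : 1 ≤ b) :
    nthPrime (a + b) < nthPrime a * nthPrime b := by
  rcases le_total a b with hab | hab
  · have h := main_le ha hb hab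
    simpa [nthPrime] using h
  · have h := main_le hb ha hab
    rw [nthPrime, nthPrime, nthPrime, show a + b - 1 = b + a - 1 by omega, mul_comm]
    exact h
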